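/- Let M be a finite matroid of rank at least 1, a ≥ 1 be an integer, and 𝒳 ⊆ ℛ_a(M). Then there exists a nonloop e ∈ E(M) such that ε_M(𝒳 ∩ ℛ_a(M / e)) ≥ (1 - a/r(M)) · ε_M(𝒳). -/

import Mathlib

open Set
open scoped Classical

namespace Matroid

variable {α β : Type*}

/-- The rank of a set `X` in a matroid `M`: the maximum size of an independent subset of `X`
(appropriate for finite matroids). -/
noncomputable def rk (M : Matroid α) (X : Set α) : ℕ :=
  sSup {n | ∃ I, I ⊆ X ∧ M.Indep I ∧ I.ncard = n}

/-- The rank `r(M)` of a matroid `M`. -/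
noncomputable def rank (M : Matroid α) : ℕ := M.rk M.E

/-- The deletion `M \ D` of a set `D` from `M`. -/
def deleteSet (M : Matroid α) (D : Set α) : Matroid α := M ↾ (M.E \ D)

/-- The contraction `M / C` of a set `C` in `M`, defined via duality. -/
def contractSet (M : Matroid α) (C : Set α) : Matroid α := (M✶.deleteSet C)✶

/-- `N` is a minor of `M`, i.e. `N = M / C \ D` for some sets `C` and `D`. -/
def IsMinorSet (N M : Matroid α) : Prop := ∃ C D : Set α, (M.contractSet C).deleteSet D = N

/-- An isomorphism between matroids, possibly on different ground types. -/
def IsIso (M : Matroid α) (N : Matroid β) : Prop :=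
  ∃ e : M.E ≃ N.E, ∀ I : Set M.E, M.Indep ((↑) '' I) ↔ N.Indep ((↑) '' (e '' I))

/-- `N` is isomorphic to the uniform matroid `U_{k,n}`: the ground set has `n` elements and
the independent sets are exactly the subsets with at most `k` elements. -/
def IsUnif (N : Matroid α) (k n : ℕ) : Prop :=
  N.E.Finite ∧ N.E.ncard = n ∧ ∀ I ⊆ N.E, (N.Indep I ↔ I.ncard ≤ k)

/-- `M` has a minor isomorphic to `U_{k,n}`. -/
def HasUnifMinor (M : Matroid α) (k n : ℕ) : Prop :=
  ∃ N : Matroid α, N.IsMinorSet M ∧ N.IsUnif k n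

/-- `τ_a(M)`: the minimum size of a collection of subsets of `E(M)`, each of rank at most `a`,
whose union is `E(M)`. -/
noncomputable def tau (M : Matroid α) (a : ℕ) : ℕ :=
  sInf {n | ∃ 𝒞 : Finset (Set α),
    𝒞.card = n ∧ (∀ X ∈ 𝒞, X ⊆ M.E ∧ M.rk X ≤ a) ∧ M.E ⊆ ⋃₀ ↑𝒞}

/-- `M` is `d`-thick: every collection of sets, each of rank less than `r(M)`, whose union
is `E(M)`, has at least `d` members. -/
def Thick (M : Matroid α) (d : ℕ) : Prop :=
  ∀ 𝒞 : Finset (Set α), (∀ X ∈ 𝒞, X ⊆ M.E ∧ M.rk X < M.rank) → M.E ⊆ ⋃₀ ↑𝒞 → d ≤ 𝒞.card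

/-- A set `X` is `d`-thick in `M` if the restriction `M|X` is `d`-thick. -/
def ThickIn (M : Matroid α) (d : ℕ) (X : Set α) : Prop := (M ↾ X).Thick d

/-- A collection of sets is simple in `M` if its members are pairwise dissimilar,
i.e. distinct members have distinct closures. -/
def SimpleColl (M : Matroid α) (𝒳 : Finset (Set α)) : Prop :=
  ∀ X ∈ 𝒳, ∀ Y ∈ 𝒳, M.closure X = M.closure Y → X = Y

/-- `ε_M(𝒳)`: the maximum size of a subcollection of `𝒳` that is simple in `M`. -/
noncomputable def eps (M : Matroid α) (𝒳 : Finset (Set α)) : ℕ :=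
  sSup {n | ∃ 𝒴 : Finset (Set α), 𝒴 ⊆ 𝒳 ∧ M.SimpleColl 𝒴 ∧ 𝒴.card = n}

/-- `𝒳` is `d`-firm in `M`: every subcollection `𝒳'` with `|𝒳'| > |𝒳|/d` has the same rank
as `𝒳`. -/
def Firm (M : Matroid α) (d : ℕ) (𝒳 : Finset (Set α)) : Prop :=
  ∀ 𝒳' ⊆ 𝒳, 𝒳.card < d * 𝒳'.card → M.rk (⋃₀ ↑𝒳') = M.rk (⋃₀ ↑𝒳)

/-- `ℱ` is a cover of the collection `𝒳` in `M`: every member of `𝒳` is contained in a member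
of `ℱ`. -/
def CoverOf (M : Matroid α) (ℱ 𝒳 : Finset (Set α)) : Prop :=
  (∀ F ∈ ℱ, F ⊆ M.E) ∧ ∀ X ∈ 𝒳, ∃ F ∈ ℱ, X ⊆ F

/-- `ℱ` is a cover of the matroid `M`: every element of `E(M)` lies in a member of `ℱ`. -/
def CoverOfGround (M : Matroid α) (ℱ : Finset (Set α)) : Prop :=
  (∀ F ∈ ℱ, F ⊆ M.E) ∧ M.E ⊆ ⋃₀ ↑ℱ

/-- The weight `wt^d_M(ℱ) = Σ_{F ∈ ℱ} d^{r_M(F)}`. -/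
noncomputable def wt (M : Matroid α) (d : ℕ) (ℱ : Finset (Set α)) : ℕ :=
  ∑ F ∈ ℱ, d ^ M.rk F

/-- `ℱ` is a `d`-minimal cover of the collection `𝒳` in `M`. -/
def MinimalCoverOf (M : Matroid α) (d : ℕ) (ℱ 𝒳 : Finset (Set α)) : Prop :=
  M.CoverOf ℱ 𝒳 ∧ ∀ ℱ' : Finset (Set α), M.CoverOf ℱ' 𝒳 → M.wt d ℱ ≤ M.wt d ℱ'

/-- `ℱ` is a `d`-minimal cover of the matroid `M`. -/
def MinimalCoverOfGround (M : Matroid α) (d : ℕ) (ℱ : Finset (Set α)) : Prop :=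
  M.CoverOfGround ℱ ∧ ∀ ℱ' : Finset (Set α), M.CoverOfGround ℱ' → M.wt d ℱ ≤ M.wt d ℱ'

/-- `τ^d(M)`: the minimum weight of a cover of `M`. -/
noncomputable def tauW (M : Matroid α) (d : ℕ) : ℕ :=
  sInf {n | ∃ ℱ : Finset (Set α), M.CoverOfGround ℱ ∧ M.wt d ℱ = n}

/-- `𝒳` is `d`-scattered in `M`: every member of `𝒳` is `d`-thick in `M`, and
`{cl_M(X) : X ∈ 𝒳}` is a `d`-minimal cover of `𝒳` in `M`. -/
def Scattered (M : Matroid α) (d : ℕ) (𝒳 : Finset (Set α)) : Prop :=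
  (∀ X ∈ 𝒳, M.ThickIn d X) ∧ M.MinimalCoverOf d (𝒳.image M.closure) 𝒳

/-- `(M, 𝒮; L)` is an `(a, q, h, d)`-pyramid, where `h = L.length` and `L` lists the
elements `e_1, …, e_h`. -/
def IsPyramid (M : Matroid α) (𝒮 : Finset (Set α)) (L : List α) (a q d : ℕ) : Prop :=
  L.Nodup ∧ M.Indep {x | x ∈ L} ∧
  𝒮.Nonempty ∧
  (∀ S ∈ 𝒮, S ⊆ M.E ∧ M.rk S = a) ∧
  (∀ S ∈ 𝒮, M.rk (S ∪ {x | x ∈ L}) = M.rk S + M.rk {x | x ∈ L}) ∧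
  (∀ i < L.length, ∀ S ∈ 𝒮, ∃ f : Fin q → Set α,
    (∀ j, f j ∈ 𝒮) ∧
    (∀ j k, j ≠ k →
      (M.contractSet {x | x ∈ L.take i}).closure (f j) ≠
        (M.contractSet {x | x ∈ L.take i}).closure (f k)) ∧
    (∀ j, (M.contractSet {x | x ∈ L.take (i+1)}).closure (f j) =
      (M.contractSet {x | x ∈ L.take (i+1)}).closure S)) ∧
  (∀ S ∈ 𝒮, M.ThickIn d S)

/-- `M` is representable over the field `F`. -/
def RepresentableOver (M : Matroid α) (F : Type*) [Field F] : Prop :=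
  ∃ (n : ℕ) (φ : α → (Fin n → F)),
    ∀ I ⊆ M.E, (M.Indep I ↔ LinearIndependent F (fun x : I => φ x))

end Matroid

namespace Matroid

section Aux

variable {α : Type*} {M : Matroid α} {I J X B : Set α} {e : α}

lemma my_ncard_le (hE : M.E.Finite) (hI : M.IsBasis I X) (hJ : M.Indep J) (hJX : J ⊆ X) :
    J.ncard ≤ I.ncard := by
  obtain ⟨J', hJ', hJJ'⟩ := hJ.subset_isBasis_of_subset hJX hI.subset_ground
  have h1 : J'.ncard = I.ncard :=
    (hJ'.isBase_restrict).ncard_eq_ncard_of_isBase (hI.isBase_restrict)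
  exact (ncard_le_ncard hJJ' (hE.subset hJ'.indep.subset_ground)).trans h1.le

lemma my_rk_eq (hE : M.E.Finite) (hI : M.IsBasis I X) : M.rk X = I.ncard := by
  apply IsGreatest.csSup_eq
  constructor
  · exact ⟨I, hI.subset, hI.indep, rfl⟩
  · rintro n ⟨J, hJX, hJ, rfl⟩
    exact my_ncard_le hE hI hJ hJX

lemma my_base_of_basis_of_base_subset (hB2 : M.IsBase B) (hB2X : B ⊆ X) (hI : M.IsBasis I X) :
    M.IsBase I := by
  by_contra h
  obtain ⟨x, hx, hxi⟩ := hI.indep.exists_insert_of_not_isBase h hB2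
  exact hx.2 (hI.mem_of_insert_indep (hB2X hx.1) hxi)

lemma my_contract_ground (C : Set α) : (M.contractSet C).E = M.E \ C := rfl

lemma my_contract_indep_iff (he : M.Indep {e}) (hIE : I ⊆ M.E \ {e}) :
    (M.contractSet {e}).Indep I ↔ M.Indep (insert e I) := by
  have heE : e ∈ M.E := he.subset_ground rfl
  show ((M✶ ↾ (M✶.E \ {e}))✶).Indep I ↔ _
  rw [dual_indep_iff_exists']
  constructor
  · rintro ⟨hIN, B, hB, hdisj⟩
    rw [isBase_restrict_iff (diff_subset)] at hB
    obtain ⟨B₀, hB₀, heB₀⟩ := he.exists_isBase_superset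
    have heB₀' : e ∈ B₀ := heB₀ rfl
    have hcompl : M✶.IsBase (M.E \ B₀) := hB₀.compl_isBase_dual
    have hsub : M.E \ B₀ ⊆ M✶.E \ {e} := by
      rw [dual_ground]
      intro x hx
      exact ⟨hx.1, fun hxe => hx.2 (hxe ▸ heB₀')⟩
    have hBbase : M✶.IsBase B := my_base_of_basis_of_base_subset hcompl hsub hB
    have hMB : M.IsBase (M.E \ B) := hBbase.compl_isBase_of_dual
    refine hMB.indep.subset ?_
    intro x hx
    rcases hx with rfl | hxI
    · exact ⟨heE, fun hxB => (hB.subset hxB).2 rfl⟩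
    · exact ⟨(hIE hxI).1, fun hxB => (hdisj.ne_of_mem hxI hxB) rfl⟩
  · intro h
    obtain ⟨B₀, hB₀, hsub⟩ := h.exists_isBase_superset
    have heB₀ : e ∈ B₀ := hsub (mem_insert _ _)
    have hdB : M✶.IsBase (M.E \ B₀) := hB₀.compl_isBase_dual
    have hsubE : M.E \ B₀ ⊆ M✶.E \ {e} := by
      rw [dual_ground]
      exact fun x hx => ⟨hx.1, fun hxe => hx.2 (hxe ▸ heB₀)⟩
    refine ⟨hIE, M.E \ B₀, ?_, ?_⟩
    · rw [isBase_restrict_iff (diff_subset), isBasis_iff_indep_closure]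
      refine ⟨hdB.indep, ?_, hsubE⟩
      rw [(isBase_iff_indep_closure_eq.mp hdB).2]
      exact diff_subset
    · exact Disjoint.mono_left (hsub.trans' (subset_insert _ _)) disjoint_sdiff_right

lemma my_contract_rk {a : ℕ} (hE : M.E.Finite) (he : M.Indep {e}) (hX : X ⊆ M.E)
    (hcl : e ∉ M.closure X) (hrk : M.rk X = a) : (M.contractSet {e}).rk X = a := by
  obtain ⟨I, hI⟩ := M.exists_isBasis X hX
  have hIa : I.ncard = a := by rw [← my_rk_eq hE hI]; exact hrk
  have heI : e ∉ M.closure I := by rw [hI.closure_eq_closure]; exact hcl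
  have heX : e ∉ X := fun h => hcl (M.mem_closure_of_mem h hX)
  have heInotmem : e ∉ I := fun h => heX (hI.subset h)
  have heE : e ∈ M.E := he.subset_ground rfl
  have heIi : M.Indep (insert e I) := by
    rw [hI.indep.insert_indep_iff_of_notMem heInotmem]
    exact ⟨heE, heI⟩
  have hXE' : X ⊆ M.E \ {e} := fun x hx => ⟨hX hx, fun hxe => heX (hxe ▸ hx)⟩
  have hIE' : I ⊆ M.E \ {e} := hI.subset.trans hXE'
  have hNE : (M.contractSet {e}).E.Finite := by
    rw [my_contract_ground]; exact hE.subset diff_subset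
  have hIN : (M.contractSet {e}).IsBasis I X := by
    refine Indep.isBasis_of_maximal_subset ?_ hI.subset ?_ ?_
    · exact (my_contract_indep_iff he hIE').mpr heIi
    · intro J hJ hIJ hJX
      have hJE : J ⊆ M.E \ {e} := by
        have := hJ.subset_ground
        rwa [my_contract_ground] at this
      have hJM : M.Indep J := ((my_contract_indep_iff he hJE).mp hJ).subset (subset_insert _ _)
      exact (hI.eq_of_subset_indep hJM hIJ hJX).symm.subset
    · rw [my_contract_ground]; exact hXE'
  rw [my_rk_eq hNE hIN, hIa]

lemma my_eps_spec (M : Matroid α) (𝒳 : Finset (Set α)) :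
    ∃ 𝒴, 𝒴 ⊆ 𝒳 ∧ M.SimpleColl 𝒴 ∧ 𝒴.card = M.eps 𝒳 := by
  have hbdd : BddAbove {n | ∃ 𝒴 : Finset (Set α), 𝒴 ⊆ 𝒳 ∧ M.SimpleColl 𝒴 ∧ 𝒴.card = n} := by
    refine ⟨𝒳.card, ?_⟩
    rintro n ⟨𝒴, h1, _, rfl⟩
    exact Finset.card_le_card h1
  have hne : (0 : ℕ) ∈ {n | ∃ 𝒴 : Finset (Set α), 𝒴 ⊆ 𝒳 ∧ M.SimpleColl 𝒴 ∧ 𝒴.card = n} :=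
    ⟨∅, Finset.empty_subset _, fun X hX => absurd hX (Finset.notMem_empty X), rfl⟩
  have := Nat.sSup_mem ⟨0, hne⟩ hbdd
  obtain ⟨𝒴, h1, h2, h3⟩ := this
  exact ⟨𝒴, h1, h2, h3⟩

lemma my_le_eps {𝒳 𝒴 : Finset (Set α)} (h1 : 𝒴 ⊆ 𝒳) (h2 : M.SimpleColl 𝒴) :
    𝒴.card ≤ M.eps 𝒳 := by
  have hbdd : BddAbove {n | ∃ 𝒴 : Finset (Set α), 𝒴 ⊆ 𝒳 ∧ M.SimpleColl 𝒴 ∧ 𝒴.card = n} := by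
    refine ⟨𝒳.card, ?_⟩
    rintro n ⟨𝒴', h1', _, rfl⟩
    exact Finset.card_le_card h1'
  exact le_csSup hbdd ⟨𝒴, h1, h2, rfl⟩

end Aux

end Matroid

namespace Matroid

/-- If `M` is a finite matroid of rank at least `1`, `a ≥ 1` and
`𝒳 ⊆ ℛ_a(M)`, then there is a nonloop `e ∈ E(M)` with
`ε_M(𝒳 ∩ ℛ_a(M/e)) ≥ (1 - a/r(M)) · ε_M(𝒳)`. -/
theorem statement9 {α : Type*} (a : ℕ) (ha : 1 ≤ a)
    (M : Matroid α) (hM : M.Finite) (hr : 1 ≤ M.rank) (𝒳 : Finset (Set α))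
    (h𝒳 : ∀ X ∈ 𝒳, X ⊆ M.E ∧ M.rk X = a) :
    ∃ e ∈ M.E, M.rk {e} = 1 ∧
      ((M.rank : ℚ) - a) * M.eps 𝒳 ≤
        (M.rank : ℚ) * M.eps (𝒳.filter fun X =>
          X ⊆ (M.contractSet {e}).E ∧ (M.contractSet {e}).rk X = a) := by
  classical
  have hE : M.E.Finite := M.ground_finite
  obtain ⟨B, hB⟩ := M.exists_isBase
  have hBfin : B.Finite := hE.subset hB.subset_ground
  have hrB : M.rank = B.ncard := my_rk_eq hE hB.isBasis_ground
  obtain ⟨𝒴, h𝒴𝒳, h𝒴simp, h𝒴card⟩ := my_eps_spec M 𝒳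
  set Bf : Finset α := hBfin.toFinset with hBfdef
  have hBfcard : Bf.card = M.rank := by
    rw [hrB, Set.ncard_eq_toFinset_card _ hBfin]
  -- per-X bound on |B ∩ cl X|
  have hperX : ∀ X ∈ 𝒴, (Bf.filter fun f => f ∈ M.closure X).card ≤ a := by
    intro X hX
    obtain ⟨hXE, hXrk⟩ := h𝒳 X (h𝒴𝒳 hX)
    obtain ⟨I, hI⟩ := M.exists_isBasis X hXE
    have hIa : I.ncard = a := by rw [← my_rk_eq hE hI]; exact hXrk
    set J : Set α := ↑(Bf.filter fun f => f ∈ M.closure X) with hJdef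
    have hJB : J ⊆ B := by
      intro x hx
      simp only [hJdef, Finset.coe_filter, Set.mem_setOf_eq, hBfdef,
        Set.Finite.mem_toFinset] at hx
      exact hx.1
    have hJcl : J ⊆ M.closure X := by
      intro x hx
      simp only [hJdef, Finset.coe_filter, Set.mem_setOf_eq] at hx
      exact hx.2
    have hcard : (Bf.filter fun f => f ∈ M.closure X).card = J.ncard := by
      rw [hJdef, Set.ncard_coe_finset]
    rw [hcard, ← hIa]
    exact my_ncard_le hE hI.isBasis_closure_right (hB.indep.subset hJB) hJcl
  -- double counting
  have hdouble : ∑ f ∈ Bf, (𝒴.filter fun X => f ∈ M.closure X).card ≤ a * 𝒴.card := by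
    have h1 : ∑ f ∈ Bf, (𝒴.filter fun X => f ∈ M.closure X).card
        = ∑ X ∈ 𝒴, (Bf.filter fun f => f ∈ M.closure X).card := by
      simp only [Finset.card_filter]
      rw [Finset.sum_comm]
    rw [h1, mul_comm]
    calc ∑ X ∈ 𝒴, (Bf.filter fun f => f ∈ M.closure X).card
        ≤ ∑ _X ∈ 𝒴, a := Finset.sum_le_sum hperX
      _ = 𝒴.card * a := by rw [Finset.sum_const, smul_eq_mul]
  -- pigeonhole
  have hpigeon : ∃ f ∈ Bf, M.rank * (𝒴.filter fun X => f ∈ M.closure X).card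
      ≤ a * M.eps 𝒳 := by
    by_contra hcon
    push_neg at hcon
    have hsum : ∀ f ∈ Bf, a * M.eps 𝒳 + 1 ≤
        M.rank * (𝒴.filter fun X => f ∈ M.closure X).card := fun f hf => hcon f hf
    have h2 := Finset.card_nsmul_le_sum Bf _ _ hsum
    rw [smul_eq_mul] at h2
    have h3 : ∑ f ∈ Bf, M.rank * (𝒴.filter fun X => f ∈ M.closure X).card
        ≤ M.rank * (a * M.eps 𝒳) := by
      rw [← Finset.mul_sum]
      exact Nat.mul_le_mul_left _ (hdouble.trans_eq (by rw [h𝒴card]))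
    rw [hBfcard] at h2
    have h4 := h2.trans h3
    have h5 := Nat.le_of_mul_le_mul_left h4 (Nat.lt_of_lt_of_le Nat.zero_lt_one hr)
    omega
  obtain ⟨e, heBf, hecnt⟩ := hpigeon
  have heB : e ∈ B := by rwa [hBfdef, Set.Finite.mem_toFinset] at heBf
  have he1 : M.Indep {e} := hB.indep.subset (Set.singleton_subset_iff.mpr heB)
  have heE : e ∈ M.E := he1.subset_ground rfl
  refine ⟨e, heE, ?_, ?_⟩
  · rw [my_rk_eq hE he1.isBasis_self, Set.ncard_singleton]
  set 𝒴' := 𝒴.filter (fun X => ¬ e ∈ M.closure X) with h𝒴'def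
  have hcardsplit : (𝒴.filter fun X => e ∈ M.closure X).card + 𝒴'.card = 𝒴.card := by
    rw [h𝒴'def]
    exact Finset.card_filter_add_card_filter_not _
  have hsubset : 𝒴' ⊆ 𝒳.filter fun X =>
      X ⊆ (M.contractSet {e}).E ∧ (M.contractSet {e}).rk X = a := by
    intro X hX
    rw [h𝒴'def, Finset.mem_filter] at hX
    obtain ⟨hX𝒴, hecl⟩ := hX
    obtain ⟨hXE, hXrk⟩ := h𝒳 X (h𝒴𝒳 hX𝒴)
    rw [Finset.mem_filter]
    refine ⟨h𝒴𝒳 hX𝒴, ?_, my_contract_rk hE he1 hXE hecl hXrk⟩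
    rw [my_contract_ground]
    exact fun x hx => ⟨hXE hx, fun hxe => hecl (hxe ▸ M.mem_closure_of_mem hx hXE)⟩
  have hsimple : M.SimpleColl 𝒴' := by
    intro X hX Y hY h
    exact h𝒴simp X (Finset.filter_subset _ _ hX) Y (Finset.filter_subset _ _ hY) h
  have heps' : 𝒴'.card ≤ M.eps (𝒳.filter fun X =>
      X ⊆ (M.contractSet {e}).E ∧ (M.contractSet {e}).rk X = a) := my_le_eps hsubset hsimple
  -- final arithmetic
  set c := (𝒴.filter fun X => e ∈ M.closure X).card
  set y := 𝒴'.card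
  set ε' := M.eps (𝒳.filter fun X =>
      X ⊆ (M.contractSet {e}).E ∧ (M.contractSet {e}).rk X = a)
  have h1 : (M.rank : ℚ) * c ≤ (a : ℚ) * (M.eps 𝒳) := by exact_mod_cast hecnt
  have h2 : (c : ℚ) + y = (M.eps 𝒳 : ℚ) := by
    rw [← h𝒴card]; exact_mod_cast hcardsplit
  have h3 : (M.rank : ℚ) * y ≤ (M.rank : ℚ) * ε' := by
    refine mul_le_mul_of_nonneg_left ?_ (by positivity)
    exact_mod_cast heps'
  have h2' : (M.rank : ℚ) * (c + y) = (M.rank : ℚ) * (M.eps 𝒳) := by rw [h2]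
  nlinarith [h1, h3, h2']


end Matroid
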